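/- Let 𝒜 be an abelian category and 𝒞 a full additive subcategory. The bounded-above 𝒞-derived category D⁻_𝒞(𝒜) = K⁻(𝒜)/(K⁻(𝒜) ∩ K_{𝒞-ac}(𝒜)) is a (full) triangulated subcategory of D_𝒞(𝒜) = K(𝒜)/K_{𝒞-ac}(𝒜): for any 𝒞-quasi-isomorphism s : Y• → X• with X• bounded above, there exists a chain map f : Z• → Y• with Z• bounded above such that s∘f is a 𝒞-quasi-isomorphism. -/

import Mathlib

open CategoryTheory Limits ZeroObject

universe v u

variable {A : Type u} [Category.{v} A] [Abelian A]

/-- A complex `X` is `𝒞`-acyclic if `Hom_𝒜(C, X)` is an acyclic complex of abelian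
groups for every `C ∈ 𝒞`. -/
def CAcyclic (𝒞 : Set A) (X : CochainComplex A ℤ) : Prop :=
  ∀ C ∈ 𝒞, ∀ i : ℤ,
    (((preadditiveCoyoneda.obj (Opposite.op C)).mapHomologicalComplex
      (ComplexShape.up ℤ)).obj X).ExactAt i

/-- A chain map `f` is a `𝒞`-quasi-isomorphism if `Hom_𝒜(C, f)` is a quasi-isomorphism
for every `C ∈ 𝒞`. -/
def CQuasiIso (𝒞 : Set A) {X Y : CochainComplex A ℤ} (f : X ⟶ Y) : Prop :=
  ∀ C ∈ 𝒞, QuasiIso (((preadditiveCoyoneda.obj (Opposite.op C)).mapHomologicalComplex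
      (ComplexShape.up ℤ)).map f)

/-- A cochain complex is bounded above. -/
def BoundedAbove (X : CochainComplex A ℤ) : Prop :=
  ∃ n : ℤ, ∀ i : ℤ, n < i → IsZero (X.X i)

noncomputable section Aux

def Wobj (Y : CochainComplex A ℤ) (n i : ℤ) : A :=
  if i < n then 0 else if i = n then Y.X (n + 1) else Y.X i

def gmap (Y : CochainComplex A ℤ) (n i : ℤ) : Y.X i ⟶ Wobj Y n i :=
  if h : i < n then 0
  else if h' : i = n then
    eqToHom (congrArg Y.X h') ≫ Y.d n (n + 1) ≫ eqToHom (by simp [Wobj, h, h'])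
  else eqToHom (by simp [Wobj, h, h'])

lemma gmap_lt (Y : CochainComplex A ℤ) {n i : ℤ} (h : i < n) : gmap Y n i = 0 :=
  dif_pos h

lemma gmap_self (Y : CochainComplex A ℤ) (n : ℤ) :
    gmap Y n n = Y.d n (n + 1) ≫ eqToHom (by simp [Wobj]) := by
  simp [gmap]

lemma gmap_iso (Y : CochainComplex A ℤ) {n i : ℤ} (h : n < i) : IsIso (gmap Y n i) := by
  rw [show gmap Y n i = eqToHom (by simp [Wobj, not_lt.2 h.le, h.ne']) from
    (dif_neg (not_lt.2 h.le)).trans (dif_neg h.ne')]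
  infer_instance

lemma isZero_kernel_gmap (Y : CochainComplex A ℤ) {n i : ℤ} (h : n < i) :
    IsZero (kernel (gmap Y n i)) := by
  have := gmap_iso Y h
  exact IsZero.of_iso (isZero_zero A) (kernel.ofMono (gmap Y n i))

lemma ker_gmap_d (Y : CochainComplex A ℤ) (n : ℤ) :
    kernel.ι (gmap Y n n) ≫ Y.d n (n + 1) = 0 := by
  rw [← cancel_mono (eqToHom (show Y.X (n + 1) = Wobj Y n n by simp [Wobj])), zero_comp,
    Category.assoc, ← gmap_self]
  exact kernel.condition _

lemma gmap_cond (Y : CochainComplex A ℤ) (n i j : ℤ) :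
    (kernel.ι (gmap Y n i) ≫ Y.d i j) ≫ gmap Y n j = 0 := by
  rcases lt_trichotomy j n with hj | rfl | hj
  · rw [gmap_lt Y hj, comp_zero]
  · rw [gmap_self, Category.assoc, HomologicalComplex.d_comp_d_assoc, zero_comp, comp_zero]
  · suffices h : kernel.ι (gmap Y n i) ≫ Y.d i j = 0 by rw [h, zero_comp]
    rcases lt_trichotomy i n with hi | rfl | hi
    · rw [Y.shape _ _ (by change ¬ (i + 1 = j); omega), comp_zero]
    · by_cases hij : i + 1 = j
      · subst hij; exact ker_gmap_d Y i
      · rw [Y.shape _ _ hij, comp_zero]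
    · exact (isZero_kernel_gmap Y hi).eq_of_src _ _

/-- The canonical (smart) truncation `τ≤n`. -/
def trunc (Y : CochainComplex A ℤ) (n : ℤ) : CochainComplex A ℤ where
  X i := kernel (gmap Y n i)
  d i j := kernel.lift _ (kernel.ι _ ≫ Y.d i j) (gmap_cond Y n i j)
  shape i j hij := by
    rw [← cancel_mono (kernel.ι (gmap Y n j)), kernel.lift_ι, Y.shape _ _ hij,
      comp_zero, zero_comp]
  d_comp_d' i j k _ _ := by
    rw [← cancel_mono (kernel.ι (gmap Y n k)), Category.assoc, kernel.lift_ι,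
      kernel.lift_ι_assoc, Category.assoc, HomologicalComplex.d_comp_d, comp_zero, zero_comp]

/-- The inclusion `τ≤n Y ⟶ Y`. -/
def truncι (Y : CochainComplex A ℤ) (n : ℤ) : trunc Y n ⟶ Y where
  f i := kernel.ι (gmap Y n i)
  comm' i j _ := by simp [trunc]

lemma truncι_isIso (Y : CochainComplex A ℤ) {n i : ℤ} (h : i < n) :
    IsIso ((truncι Y n).f i) := by
  show IsIso (kernel.ι (gmap Y n i))
  rw [gmap_lt Y h, ← kernelZeroIsoSource_hom]
  infer_instance

variable {B : Type u} [Category.{v} B]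

lemma coyoneda_map_apply [Preadditive B] (C : B) {P Q : B} (f : P ⟶ Q)
    (u : (preadditiveCoyoneda.obj (Opposite.op C)).obj P) :
    (preadditiveCoyoneda.obj (Opposite.op C)).map f u = u ≫ f := rfl

lemma coyoneda_map_mono [Preadditive B] (C : B) {P Q : B} (f : P ⟶ Q) [Mono f] :
    Mono ((preadditiveCoyoneda.obj (Opposite.op C)).map f) := by
  rw [AddCommGrpCat.mono_iff_injective]
  intro a b hab
  exact (cancel_mono f).1 hab

end Aux

/-- `D⁻_𝒞(𝒜)` is a full triangulated subcategory of `D_𝒞(𝒜)`: for any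
`𝒞`-quasi-isomorphism `s : Y• → X•` with `X•` bounded above, there is a chain map
`f : Z• → Y•` with `Z•` bounded above such that `s ∘ f` is a `𝒞`-quasi-isomorphism. -/
theorem stmt7 (𝒞 : Set A) (X Y : CochainComplex A ℤ) (s : Y ⟶ X)
    (hs : CQuasiIso 𝒞 s) (hX : BoundedAbove X) :
    ∃ (Z : CochainComplex A ℤ) (f : Z ⟶ Y), BoundedAbove Z ∧ CQuasiIso 𝒞 (f ≫ s) := by
  obtain ⟨m, hm⟩ := hX
  set n := m + 1 with hn
  refine ⟨trunc Y n, truncι Y n, ⟨n, fun i hi => isZero_kernel_gmap Y hi⟩, ?_⟩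
  intro C hC
  set G := preadditiveCoyoneda.obj (Opposite.op C) with hG
  set F := G.mapHomologicalComplex (ComplexShape.up ℤ) with hF
  haveI hqs : QuasiIso (F.map s) := hs C hC
  rw [quasiIso_iff]
  intro i
  -- exactness of `F.obj X` in degrees ≥ n
  have hFX_exact : ∀ i : ℤ, n ≤ i → (F.obj X).ExactAt i := by
    intro i hi
    rw [HomologicalComplex.exactAt_iff]
    exact ShortComplex.exact_of_isZero_X₂ _ (G.map_isZero (hm i (by omega)))
  rcases lt_or_ge i n with hi | hi
  · -- small degrees: `F.map (truncι)` is a quasi-iso at `i`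
    haveI : QuasiIsoAt (F.map (truncι Y n)) i := by
      rw [quasiIsoAt_iff' _ (i - 1) i (i + 1) (by simp) (by simp)]
      haveI h1 : IsIso ((truncι Y n).f (i - 1)) := truncι_isIso Y (by omega)
      haveI h2 : IsIso ((truncι Y n).f i) := truncι_isIso Y hi
      haveI : Epi (((HomologicalComplex.shortComplexFunctor' AddCommGrpCat _
          (i - 1) i (i + 1)).map (F.map (truncι Y n))).τ₁) := by
        show Epi (G.map ((truncι Y n).f (i - 1)))
        infer_instance
      haveI : IsIso (((HomologicalComplex.shortComplexFunctor' AddCommGrpCat _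
          (i - 1) i (i + 1)).map (F.map (truncι Y n))).τ₂) := by
        show IsIso (G.map ((truncι Y n).f i))
        infer_instance
      haveI : Mono (((HomologicalComplex.shortComplexFunctor' AddCommGrpCat _
          (i - 1) i (i + 1)).map (F.map (truncι Y n))).τ₃) := by
        show Mono (G.map ((truncι Y n).f (i + 1)))
        haveI : Mono ((truncι Y n).f (i + 1)) := by
          show Mono (kernel.ι (gmap Y n (i + 1))); infer_instance
        exact coyoneda_map_mono C _
      exact ShortComplex.quasiIso_of_epi_of_isIso_of_mono _
    have : F.map (truncι Y n ≫ s) = F.map (truncι Y n) ≫ F.map s := F.map_comp _ _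
    rw [this]
    infer_instance
  · -- large degrees: both sides are exact at `i`
    have hFZ_exact : (F.obj (trunc Y n)).ExactAt i := by
      rcases eq_or_lt_of_le hi with heq | hi'
      · -- degree n : element chase
        obtain rfl : i = n := heq.symm
        have hFY_exact : (F.obj Y).ExactAt n :=
          (quasiIsoAt_iff_exactAt' (F.map s) n (hFX_exact n le_rfl)).1 inferInstance
        rw [HomologicalComplex.exactAt_iff' _ (n - 1) n (n + 1) (by simp) (by simp)]
          at hFY_exact ⊢
        rw [ShortComplex.ab_exact_iff] at hFY_exact ⊢
        intro (u : C ⟶ kernel (gmap Y n n)) _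
        have hv : (u ≫ kernel.ι (gmap Y n n)) ≫ Y.d n (n + 1) = 0 := by
          rw [Category.assoc, ker_gmap_d, comp_zero]
        obtain ⟨(w : C ⟶ Y.X (n - 1)), hw⟩ := hFY_exact (u ≫ kernel.ι (gmap Y n n)) (by
          show (u ≫ kernel.ι (gmap Y n n)) ≫ Y.d n (n + 1) = 0
          exact hv)
        refine ⟨kernel.lift (gmap Y n (n - 1)) w
          (by rw [gmap_lt Y (by omega)]; exact comp_zero), ?_⟩
        show (kernel.lift (gmap Y n (n - 1)) w _ ≫ (trunc Y n).d (n - 1) n :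
          C ⟶ kernel (gmap Y n n)) = u
        rw [← cancel_mono (kernel.ι (gmap Y n n))]
        refine (Category.assoc _ _ _).trans ?_
        erw [show (trunc Y n).d (n - 1) n ≫ kernel.ι _ =
          kernel.ι (gmap Y n (n - 1)) ≫ Y.d (n - 1) n from kernel.lift_ι _ _ _]
        erw [kernel.lift_ι_assoc]
        exact hw
      · -- degrees > n : the middle object is zero
        rw [HomologicalComplex.exactAt_iff]
        exact ShortComplex.exact_of_isZero_X₂ _ (G.map_isZero (isZero_kernel_gmap Y hi'))
    rw [quasiIsoAt_iff_exactAt _ i hFZ_exact]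
    exact hFX_exact i hi
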